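/- (Resonance lower bound.) Let p_{α+1} satisfy Hypothesis 1 with 1 ≤ α ≤ 2 and set Ω_{k+1}(ξ₁,…,ξ_{k+2}) := Σ_{n=1}^{k+2} p_{α+1}(ξ_n). For every C₁ ≥ 1 there exist constants c > 0 and K ≥ 1 (depending only on C₁, α and p_{α+1}) such that for every integer k ≥ 1 and every (ξ₁,…,ξ_{k+2}) ∈ Z^{k+2} with Σ_{j=1}^{k+2} ξ_j = 0, |ξ₁| ≤ C₁|ξ₂|, |ξ₂| ≤ C₁|ξ₁|, |ξ₃| ≤ C₁|ξ₂|, and — in case k ≥ 2 — |ξ₃| ≥ K·k·max_{4≤j≤k+2}|ξ_j|, one has |Ω_{k+1}(ξ₁,…,ξ_{k+2})| ≥ c |ξ₃| |ξ₁|^α, provided |ξ₁| ≥ K (1 + max_{ξ∈[0,ξ₀]}|p'_{α+1}(ξ)|)^{1/α}. -/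

import Mathlib

open Set

noncomputable section

/-- **Hypothesis 1**: `p` is the symbol of the dispersive operator `L_{α+1}`;
it is an odd real-valued function of class `C¹` on `ℝ` and `C²` away from the
origin, and for `ξ ≥ ξ₀` the first and second derivatives of `p` are comparable
to `ξ^α` and `ξ^(α-1)` respectively. -/
structure Hyp1 (α ξ₀ c C : ℝ) (p : ℝ → ℝ) : Prop where
  xi0_pos : 0 < ξ₀
  c_pos : 0 < c
  c_le_C : c ≤ C
  smooth1 : ContDiff ℝ 1 p
  smooth2 : ∀ x : ℝ, x ≠ 0 → ContDiffAt ℝ 2 p x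
  odd : ∀ x : ℝ, p (-x) = -p x
  deriv_lb : ∀ ξ : ℝ, ξ₀ ≤ ξ → c * ξ ^ α ≤ deriv p ξ
  deriv_ub : ∀ ξ : ℝ, ξ₀ ≤ ξ → deriv p ξ ≤ C * ξ ^ α
  deriv2_lb : ∀ ξ : ℝ, ξ₀ ≤ ξ → c * ξ ^ (α - 1) ≤ deriv (deriv p) ξ
  deriv2_ub : ∀ ξ : ℝ, ξ₀ ≤ ξ → deriv (deriv p) ξ ≤ C * ξ ^ (α - 1)

namespace ResonanceAux

variable {α ξ₀ c₀ C₀ : ℝ} {p : ℝ → ℝ}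

lemma p_zero (hp : Hyp1 α ξ₀ c₀ C₀ p) : p 0 = 0 := by
  have h := hp.odd 0
  rw [neg_zero] at h
  linarith

lemma deriv_even (hp : Hyp1 α ξ₀ c₀ C₀ p) (x : ℝ) : deriv p (-x) = deriv p x := by
  have h : deriv (fun y => p (-y)) x = -deriv p (-x) := deriv_comp_neg p x
  have h2 : (fun y => p (-y)) = fun y => -p y := funext hp.odd
  rw [h2, deriv.fun_neg] at h
  linarith

lemma pdiff (hp : Hyp1 α ξ₀ c₀ C₀ p) (x : ℝ) : DifferentiableAt ℝ p x :=
  hp.smooth1.differentiable one_ne_zero x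

lemma qcont (hp : Hyp1 α ξ₀ c₀ C₀ p) : Continuous (deriv p) :=
  hp.smooth1.continuous_deriv le_rfl

lemma qdiff (hp : Hyp1 α ξ₀ c₀ C₀ p) (x : ℝ) (hx : x ≠ 0) :
    DifferentiableAt ℝ (deriv p) x := by
  obtain ⟨u, hu, hcd⟩ := (hp.smooth2 x hx).contDiffOn le_rfl (by simp)
  obtain ⟨v, hvu, hv, hxv⟩ := mem_nhds_iff.mp hu
  have h2 : ContDiffOn ℝ 2 p v := hcd.mono hvu
  have h1 : ContDiffOn ℝ 1 (deriv p) v := h2.deriv_of_isOpen hv (by norm_num)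
  exact (h1.differentiableOn one_ne_zero).differentiableAt (hv.mem_nhds hxv)

/-- Growth of `deriv p` from the lower bound on the second derivative. -/
lemma qgrow (hp : Hyp1 α ξ₀ c₀ C₀ p) (hα1 : 1 ≤ α) (u v : ℝ)
    (hu : ξ₀ ≤ u) (huv : u < v) :
    c₀ * u ^ (α - 1) * (v - u) ≤ deriv p v - deriv p u := by
  have hu0 : 0 < u := lt_of_lt_of_le hp.xi0_pos hu
  obtain ⟨θ, hθ, heq⟩ := exists_deriv_eq_slope (deriv p) huv
    (qcont hp).continuousOn
    (fun x hx => (qdiff hp x (ne_of_gt (lt_trans hu0 hx.1))).differentiableWithinAt)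
  have hθu : u < θ := hθ.1
  have hlb : c₀ * θ ^ (α - 1) ≤ deriv (deriv p) θ :=
    hp.deriv2_lb θ (le_trans hu hθu.le)
  have hmono : u ^ (α - 1) ≤ θ ^ (α - 1) :=
    Real.rpow_le_rpow hu0.le hθu.le (by linarith)
  have hvu : (0:ℝ) < v - u := by linarith
  rw [eq_div_iff (ne_of_gt hvu)] at heq
  have h1 : c₀ * u ^ (α - 1) ≤ deriv (deriv p) θ :=
    le_trans (mul_le_mul_of_nonneg_left hmono hp.c_pos.le) hlb
  calc c₀ * u ^ (α - 1) * (v - u) ≤ deriv (deriv p) θ * (v - u) :=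
        mul_le_mul_of_nonneg_right h1 hvu.le
    _ = deriv p v - deriv p u := heq

/-- Key gap estimate: `p'(t+b) - p'(t) ≥ c₀/2^α b^α - M` for `t ≥ 0`, `b ≥ ξ₀`. -/
lemma gapq (hp : Hyp1 α ξ₀ c₀ C₀ p) (hα1 : 1 ≤ α) {M : ℝ}
    (hM0 : 0 ≤ M) (hMb : ∀ x ∈ Icc (0:ℝ) ξ₀, |deriv p x| ≤ M)
    (t b : ℝ) (ht : 0 ≤ t) (hb : ξ₀ ≤ b) :
    c₀ / 2 ^ α * b ^ α - M ≤ deriv p (t + b) - deriv p t := by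
  have hα0 : (0:ℝ) ≤ α := by linarith
  have hb0 : 0 < b := lt_of_lt_of_le hp.xi0_pos hb
  have h2α : (1:ℝ) ≤ 2 ^ α := Real.one_le_rpow (by norm_num) hα0
  have h2αpos : (0:ℝ) < 2 ^ α := by linarith
  have hcdiv : c₀ / 2 ^ α ≤ c₀ := div_le_self hp.c_pos.le h2α
  have hbα : (0:ℝ) ≤ b ^ α := Real.rpow_nonneg hb0.le α
  rcases le_or_gt t ξ₀ with hcase | hcase
  · -- small t
    have h1 : c₀ * (t + b) ^ α ≤ deriv p (t + b) :=
      hp.deriv_lb _ (by linarith)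
    have h2 : b ^ α ≤ (t + b) ^ α :=
      Real.rpow_le_rpow hb0.le (by linarith) hα0
    have h3 : |deriv p t| ≤ M := hMb t ⟨ht, hcase⟩
    have h4 : deriv p t ≤ M := le_trans (le_abs_self _) h3
    have h5 : c₀ / 2 ^ α * b ^ α ≤ c₀ * b ^ α :=
      mul_le_mul_of_nonneg_right hcdiv hbα
    have h6 : c₀ * b ^ α ≤ c₀ * (t + b) ^ α :=
      mul_le_mul_of_nonneg_left h2 hp.c_pos.le
    linarith
  · -- t > ξ₀ : use second derivative growth twice
    have hb2 : 0 < b / 2 := by linarith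
    have hA := qgrow hp hα1 (t + b / 2) (t + b) (by linarith) (by linarith)
    have hB := qgrow hp hα1 t (t + b / 2) hcase.le (by linarith)
    have hmono : (b / 2) ^ (α - 1) ≤ (t + b / 2) ^ (α - 1) :=
      Real.rpow_le_rpow hb2.le (by linarith) (by linarith)
    have hrw : (b / 2) ^ (α - 1) * (b / 2) = (b / 2) ^ α := by
      calc (b / 2) ^ (α - 1) * (b / 2)
          = (b / 2) ^ (α - 1) * (b / 2) ^ (1:ℝ) := by rw [Real.rpow_one]
        _ = (b / 2) ^ (α - 1 + 1) := (Real.rpow_add hb2 _ _).symm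
        _ = (b / 2) ^ α := by ring_nf
    have hdiv : (b / 2) ^ α = b ^ α / 2 ^ α := Real.div_rpow hb0.le (by norm_num) α
    have hA' : c₀ / 2 ^ α * b ^ α ≤ deriv p (t + b) - deriv p (t + b / 2) := by
      have hmm : t + b - (t + b / 2) = b / 2 := by ring
      rw [hmm] at hA
      have h1 : c₀ * (b / 2) ^ (α - 1) * (b / 2) ≤
          c₀ * (t + b / 2) ^ (α - 1) * (b / 2) :=
        mul_le_mul_of_nonneg_right
          (mul_le_mul_of_nonneg_left hmono hp.c_pos.le) hb2.le
      have h2 : c₀ * (b / 2) ^ (α - 1) * (b / 2) = c₀ / 2 ^ α * b ^ α := by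
        rw [mul_assoc, hrw, hdiv]; ring
      linarith
    have hB' : (0:ℝ) ≤ deriv p (t + b / 2) - deriv p t := by
      have ht0 : 0 < t := lt_trans hp.xi0_pos hcase
      have h0 : 0 ≤ c₀ * t ^ (α - 1) * (t + b / 2 - t) :=
        mul_nonneg (mul_nonneg hp.c_pos.le (Real.rpow_nonneg ht0.le _)) (by linarith)
      linarith
    linarith

/-- Mean value form used for the three-point estimate. -/
lemma slope2 (hp : Hyp1 α ξ₀ c₀ C₀ p) (B v : ℝ) (hv : 0 < v) :
    ∃ θ ∈ Ioo (0:ℝ) v,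
      p (v + B) - p v - p B = v * (deriv p (θ + B) - deriv p θ) := by
  set F : ℝ → ℝ := fun t => p (t + B) - p t with hF
  have hFd : ∀ t : ℝ, HasDerivAt F (deriv p (t + B) - deriv p t) t := by
    intro t
    exact HasDerivAt.sub
      (HasDerivAt.comp_add_const t B (pdiff hp (t + B)).hasDerivAt)
      (pdiff hp t).hasDerivAt
  obtain ⟨θ, hθ, heq⟩ := exists_deriv_eq_slope F hv
    (Continuous.continuousOn (by
      exact ((hp.smooth1.continuous.comp (continuous_id.add continuous_const)).sub
        hp.smooth1.continuous)))
    (fun x _ => (hFd x).differentiableAt.differentiableWithinAt)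
  refine ⟨θ, hθ, ?_⟩
  have hd : deriv F θ = deriv p (θ + B) - deriv p θ := (hFd θ).deriv
  rw [hd] at heq
  have hF0 : F 0 = p B := by simp [hF, p_zero hp]
  have hFv : F v = p (v + B) - p v := rfl
  rw [hF0, hFv, sub_zero] at heq
  rw [eq_div_iff (ne_of_gt hv)] at heq
  linear_combination -heq


/-- Global bound on the derivative. -/
lemma qbound (hp : Hyp1 α ξ₀ c₀ C₀ p) (hα1 : 1 ≤ α) {M : ℝ}
    (hMb : ∀ x ∈ Icc (0:ℝ) ξ₀, |deriv p x| ≤ M) (t : ℝ) :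
    |deriv p t| ≤ M + C₀ * |t| ^ α := by
  have hC₀ : (0:ℝ) < C₀ := lt_of_lt_of_le hp.c_pos hp.c_le_C
  have key : ∀ u : ℝ, 0 ≤ u → |deriv p u| ≤ M + C₀ * u ^ α := by
    intro u hu
    rcases le_or_gt u ξ₀ with h | h
    · have h1 : |deriv p u| ≤ M := hMb u ⟨hu, h⟩
      have h2 : 0 ≤ C₀ * u ^ α := mul_nonneg hC₀.le (Real.rpow_nonneg hu _)
      linarith
    · have h1 := hp.deriv_lb u h.le
      have h2 := hp.deriv_ub u h.le
      have h3 : 0 < u ^ α :=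
        Real.rpow_pos_of_pos (lt_trans hp.xi0_pos h) _
      have h4 : 0 < deriv p u := lt_of_lt_of_le (mul_pos hp.c_pos h3) h1
      rw [abs_of_pos h4]
      have hM0' : 0 ≤ M := le_trans (abs_nonneg _) (hMb 0 ⟨le_rfl, hp.xi0_pos.le⟩)
      linarith
  rcases le_or_gt 0 t with h | h
  · rw [abs_of_nonneg h]; exact key t h
  · have he : deriv p t = deriv p (-t) := by
      have := deriv_even hp (-t)
      rw [neg_neg] at this
      exact this
    rw [he, abs_of_neg h]
    exact key (-t) (by linarith)

/-- Lipschitz bound from the mean value theorem. -/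
lemma lip (hp : Hyp1 α ξ₀ c₀ C₀ p) (hα1 : 1 ≤ α) {M : ℝ}
    (hMb : ∀ x ∈ Icc (0:ℝ) ξ₀, |deriv p x| ≤ M) (x y L : ℝ)
    (hx : |x| ≤ L) (hy : |y| ≤ L) :
    |p x - p y| ≤ |x - y| * (M + C₀ * L ^ α) := by
  have hα0 : (0:ℝ) ≤ α := by linarith
  have hC₀ : (0:ℝ) < C₀ := lt_of_lt_of_le hp.c_pos hp.c_le_C
  have key : ∀ u v : ℝ, |u| ≤ L → |v| ≤ L → u < v →
      |p v - p u| ≤ (v - u) * (M + C₀ * L ^ α) := by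
    intro u v hu hv huv
    obtain ⟨θ, hθ, heq⟩ := exists_deriv_eq_slope p huv
      hp.smooth1.continuous.continuousOn
      (fun z _ => (pdiff hp z).differentiableWithinAt)
    rw [eq_div_iff (ne_of_gt (by linarith : (0:ℝ) < v - u))] at heq
    have hθL : |θ| ≤ L := by
      rw [abs_le] at hu hv ⊢
      exact ⟨by linarith [hθ.1], by linarith [hθ.2]⟩
    have h1 : |p v - p u| = |deriv p θ| * (v - u) := by
      rw [← heq, abs_mul, abs_of_pos (by linarith : (0:ℝ) < v - u)]
    have h2 : |deriv p θ| ≤ M + C₀ * L ^ α := by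
      have hq := qbound hp hα1 hMb θ
      have h3 : |θ| ^ α ≤ L ^ α := Real.rpow_le_rpow (abs_nonneg θ) hθL hα0
      have h4 : C₀ * |θ| ^ α ≤ C₀ * L ^ α := mul_le_mul_of_nonneg_left h3 hC₀.le
      linarith
    rw [h1, mul_comm]
    exact mul_le_mul_of_nonneg_left h2 (by linarith)
  rcases lt_trichotomy x y with h | h | h
  · rw [abs_sub_comm (p x) (p y), abs_sub_comm x y,
      abs_of_pos (by linarith : (0:ℝ) < y - x)]
    exact key x y hx hy h
  · subst h; simp
  · rw [abs_of_pos (by linarith : (0:ℝ) < x - y)]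
    exact key y x hy hx h

/-- Pointwise bound on `p`. -/
lemma pbound (hp : Hyp1 α ξ₀ c₀ C₀ p) (hα1 : 1 ≤ α) {M : ℝ}
    (hMb : ∀ x ∈ Icc (0:ℝ) ξ₀, |deriv p x| ≤ M) (t : ℝ) :
    |p t| ≤ |t| * (M + C₀ * |t| ^ α) := by
  have := lip hp hα1 hMb t 0 |t| le_rfl (by simp)
  simpa [p_zero hp] using this

set_option maxHeartbeats 1000000 in
/-- Core three-point resonance estimate, for `a` positive and large. -/
lemma core (hp : Hyp1 α ξ₀ c₀ C₀ p) (hα1 : 1 ≤ α) {M C₁ c' : ℝ} (hC₁ : 1 ≤ C₁)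
    (hM0 : 0 ≤ M) (hMb : ∀ x ∈ Icc (0:ℝ) ξ₀, |deriv p x| ≤ M)
    (hc'0 : 0 < c') (hc'3 : c' * C₁ ^ 2 * (2 * C₁) ^ α = c₀ / 2 ^ α)
    (a d : ℝ) (ha : 2 * C₁ * ξ₀ ≤ a) (hd : |d| ≤ C₁ ^ 2 * a)
    (had : a / (2 * C₁) ≤ |a + d|) :
    |d| * (c' * a ^ α - M) ≤ |p (a + d) - p a - p d| := by
  have hC₁0 : (0:ℝ) < C₁ := lt_of_lt_of_le one_pos hC₁
  have hα0 : (0:ℝ) ≤ α := by linarith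
  have ha0 : 0 < a := lt_of_lt_of_le (mul_pos (by linarith) hp.xi0_pos) ha
  have hξa : ξ₀ ≤ a := by
    have := mul_le_mul_of_nonneg_right (by linarith : (1:ℝ) ≤ 2 * C₁) hp.xi0_pos.le
    linarith
  have haα : (0:ℝ) ≤ a ^ α := Real.rpow_nonneg ha0.le α
  have hX : (0:ℝ) < (2 * C₁) ^ α := Real.rpow_pos_of_pos (by linarith) α
  have h2αpos : (0:ℝ) < (2:ℝ) ^ α := Real.rpow_pos_of_pos (by norm_num) α
  have hc₃ : (0:ℝ) < c₀ / 2 ^ α := div_pos hp.c_pos h2αpos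
  have hC₁sq : (1:ℝ) ≤ C₁ ^ 2 := by nlinarith
  have hX1 : (1:ℝ) ≤ (2 * C₁) ^ α := Real.one_le_rpow (by linarith) hα0
  have hprod : (1:ℝ) ≤ C₁ ^ 2 * (2 * C₁) ^ α := by nlinarith [hC₁sq, hX1]
  have hc'c₃ : c' ≤ c₀ / 2 ^ α := by
    have h := mul_le_mul_of_nonneg_left hprod hc'0.le
    rw [mul_one] at h
    nlinarith [hc'3]
  have ha2C : ξ₀ ≤ a / (2 * C₁) := by
    rw [le_div_iff₀ (by linarith : (0:ℝ) < 2 * C₁)]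
    linarith
  have hdivα : (a / (2 * C₁)) ^ α = a ^ α / (2 * C₁) ^ α :=
    Real.div_rpow ha0.le (by linarith) α
  have hc₅X : c' * a ^ α ≤ (c₀ / 2 ^ α) * (a ^ α / (2 * C₁) ^ α) := by
    have hrw : (c₀ / 2 ^ α) * (a ^ α / (2 * C₁) ^ α)
        = (c₀ / 2 ^ α) * a ^ α / (2 * C₁) ^ α := by ring
    rw [hrw, le_div_iff₀ hX]
    have hnn : 0 ≤ c' * a ^ α * (2 * C₁) ^ α :=
      mul_nonneg (mul_nonneg hc'0.le haα) hX.le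
    have h₁ := mul_le_mul_of_nonneg_left hC₁sq hnn
    have h₂ : c' * C₁ ^ 2 * (2 * C₁) ^ α * a ^ α
        = c₀ / 2 ^ α * a ^ α := by rw [hc'3]
    linarith [h₁, h₂]
  rcases lt_trichotomy d 0 with hdneg | hd0 | hdpos
  · -- d < 0
    have hdabs : |d| = -d := abs_of_neg hdneg
    have hane : a + d ≠ 0 := by
      intro h0
      rw [h0, abs_zero] at had
      have : 0 < a / (2 * C₁) := by positivity
      linarith
    rcases hane.lt_or_gt with hneg2 | hpos2
    · -- a + d < 0
      have habs : |a + d| = -(a + d) := abs_of_neg hneg2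
      rw [habs] at had
      have hBξ : ξ₀ ≤ -(a + d) := le_trans ha2C had
      obtain ⟨θ, hθ, heq⟩ := slope2 hp (-(a + d)) a ha0
      rw [show a + -(a + d) = -d by ring, hp.odd (a + d), hp.odd d] at heq
      have hgap := gapq hp hα1 hM0 hMb θ (-(a + d)) hθ.1.le hBξ
      have hmono : (a / (2 * C₁)) ^ α ≤ (-(a + d)) ^ α :=
        Real.rpow_le_rpow (by positivity) had hα0
      have hΔ : (c₀ / 2 ^ α) * (a ^ α / (2 * C₁) ^ α) - M
          ≤ deriv p (θ + -(a + d)) - deriv p θ := by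
        have h := mul_le_mul_of_nonneg_left hmono hc₃.le
        rw [hdivα] at h
        linarith
      have heq2 : p (a + d) - p a - p d
          = a * (deriv p (θ + -(a + d)) - deriv p θ) := by linarith
      have hda : a ≤ -d := by linarith
      have hd' : -d ≤ C₁ ^ 2 * a := by rw [← hdabs]; exact hd
      have h1 : (-d) * (c' * a ^ α)
          ≤ a * ((c₀ / 2 ^ α) * (a ^ α / (2 * C₁) ^ α)) := by
        have hrw : a * ((c₀ / 2 ^ α) * (a ^ α / (2 * C₁) ^ α))
            = a * (c₀ / 2 ^ α) * a ^ α / (2 * C₁) ^ α := by ring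
        rw [hrw, le_div_iff₀ hX]
        have hfirst : (-d) * (c' * a ^ α * (2 * C₁) ^ α)
            ≤ C₁ ^ 2 * a * (c' * a ^ α * (2 * C₁) ^ α) :=
          mul_le_mul_of_nonneg_right hd'
            (mul_nonneg (mul_nonneg hc'0.le haα) hX.le)
        have h₂ : c' * C₁ ^ 2 * (2 * C₁) ^ α * (a * a ^ α)
            = c₀ / 2 ^ α * (a * a ^ α) := by rw [hc'3]
        linarith [hfirst, h₂]
      have h2 : a * ((c₀ / 2 ^ α) * (a ^ α / (2 * C₁) ^ α) - M)
          ≤ a * (deriv p (θ + -(a + d)) - deriv p θ) :=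
        mul_le_mul_of_nonneg_left hΔ ha0.le
      have h3 : a * M ≤ (-d) * M := mul_le_mul_of_nonneg_right hda hM0
      calc |d| * (c' * a ^ α - M) = (-d) * (c' * a ^ α) - (-d) * M := by
            rw [hdabs]; ring
        _ ≤ a * ((c₀ / 2 ^ α) * (a ^ α / (2 * C₁) ^ α)) - a * M := by linarith
        _ = a * ((c₀ / 2 ^ α) * (a ^ α / (2 * C₁) ^ α) - M) := by ring
        _ ≤ a * (deriv p (θ + -(a + d)) - deriv p θ) := h2
        _ = p (a + d) - p a - p d := heq2.symm
        _ ≤ |p (a + d) - p a - p d| := le_abs_self _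
    · -- 0 < a + d
      have habs : |a + d| = a + d := abs_of_pos hpos2
      rw [habs] at had
      have hBξ : ξ₀ ≤ a + d := le_trans ha2C had
      have hde : 0 < -d := neg_pos.mpr hdneg
      obtain ⟨θ, hθ, heq⟩ := slope2 hp (a + d) (-d) hde
      rw [show -d + (a + d) = a by ring, hp.odd d] at heq
      have hgap := gapq hp hα1 hM0 hMb θ (a + d) hθ.1.le hBξ
      have hmono : (a / (2 * C₁)) ^ α ≤ (a + d) ^ α :=
        Real.rpow_le_rpow (by positivity) had hα0
      have hΔ : c' * a ^ α - M ≤ deriv p (θ + (a + d)) - deriv p θ := by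
        have h := mul_le_mul_of_nonneg_left hmono hc₃.le
        rw [hdivα] at h
        linarith [hc₅X]
      have heq2 : -(p (a + d) - p a - p d)
          = (-d) * (deriv p (θ + (a + d)) - deriv p θ) := by linarith
      calc |d| * (c' * a ^ α - M) = (-d) * (c' * a ^ α - M) := by rw [hdabs]
        _ ≤ (-d) * (deriv p (θ + (a + d)) - deriv p θ) :=
            mul_le_mul_of_nonneg_left hΔ hde.le
        _ = -(p (a + d) - p a - p d) := heq2.symm
        _ ≤ |p (a + d) - p a - p d| := neg_le_abs _
  · subst hd0
    simp [p_zero hp]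
  · -- 0 < d
    obtain ⟨θ, hθ, heq⟩ := slope2 hp a d hdpos
    rw [add_comm d a] at heq
    have hgap := gapq hp hα1 hM0 hMb θ a hθ.1.le hξa
    have hΔ : c' * a ^ α - M ≤ deriv p (θ + a) - deriv p θ := by
      have h := mul_le_mul_of_nonneg_right hc'c₃ haα
      linarith
    have heq2 : p (a + d) - p a - p d
        = d * (deriv p (θ + a) - deriv p θ) := by linarith
    calc |d| * (c' * a ^ α - M) = d * (c' * a ^ α - M) := by
          rw [abs_of_pos hdpos]
      _ ≤ d * (deriv p (θ + a) - deriv p θ) :=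
          mul_le_mul_of_nonneg_left hΔ hdpos.le
      _ = p (a + d) - p a - p d := heq2.symm
      _ ≤ |p (a + d) - p a - p d| := le_abs_self _

end ResonanceAux

open ResonanceAux

set_option maxHeartbeats 2000000 in
/-- resonance lower bound, Lemma `lem_res1`:
with `Ω_{k+1}(ξ₁,…,ξ_{k+2}) = ∑ p(ξ_n)`, for every `C₁ ≥ 1` there are `c > 0`
and `K ≥ 1` such that for every `k ≥ 1` and every integer vector
`(ξ₁,…,ξ_{k+2})` summing to `0` with `|ξ₁| ∼ |ξ₂| ≳ |ξ₃|` (with constant `C₁`)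
and `|ξ₃| ≥ K k max_{j ≥ 4} |ξ_j|`, one has
`|Ω| ≥ c |ξ₃| |ξ₁|^α` as soon as `|ξ₁| ≥ K (1 + max_{[0,ξ₀]} |p'|)^{1/α}`.
(The indices are `0`-based: `ξ 0, ξ 1, ξ 2` play the roles of `ξ₁, ξ₂, ξ₃`.) -/
theorem resonance_lower_bound
    (α ξ₀ c₀ C₀ : ℝ) (hα : α ∈ Set.Icc (1:ℝ) 2)
    (p : ℝ → ℝ) (hp : Hyp1 α ξ₀ c₀ C₀ p)
    (C₁ : ℝ) (hC₁ : 1 ≤ C₁) :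
    ∃ c : ℝ, 0 < c ∧ ∃ K : ℝ, 1 ≤ K ∧
      ∀ (k : ℕ), 1 ≤ k →
      ∀ ξ : Fin (k + 2) → ℤ,
        (∑ j, ξ j) = 0 →
        |(ξ 0 : ℝ)| ≤ C₁ * |(ξ 1 : ℝ)| →
        |(ξ 1 : ℝ)| ≤ C₁ * |(ξ 0 : ℝ)| →
        |(ξ 2 : ℝ)| ≤ C₁ * |(ξ 1 : ℝ)| →
        (∀ j : Fin (k + 2), 3 ≤ (j : ℕ) → K * k * |(ξ j : ℝ)| ≤ |(ξ 2 : ℝ)|) →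
        K * (1 + sSup ((fun x => |deriv p x|) '' Set.Icc 0 ξ₀)) ^ (1/α) ≤ |(ξ 0 : ℝ)| →
        c * |(ξ 2 : ℝ)| * |(ξ 0 : ℝ)| ^ α ≤ |∑ n, p (ξ n)| := by
  obtain ⟨hα1, hα2⟩ := hα
  have hα0 : (0:ℝ) ≤ α := by linarith
  have hαne : α ≠ 0 := by linarith
  have hC₁0 : (0:ℝ) < C₁ := by linarith
  have hC₀ : (0:ℝ) < C₀ := lt_of_lt_of_le hp.c_pos hp.c_le_C
  set M := sSup ((fun x => |deriv p x|) '' Set.Icc 0 ξ₀) with hMdef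
  have hMb : ∀ x ∈ Icc (0:ℝ) ξ₀, |deriv p x| ≤ M := by
    intro x hx
    apply le_csSup
    · exact (isCompact_Icc.image ((qcont hp).abs)).bddAbove
    · exact ⟨x, hx, rfl⟩
  have hM0 : 0 ≤ M := le_trans (abs_nonneg _) (hMb 0 ⟨le_rfl, hp.xi0_pos.le⟩)
  have h2αpos : (0:ℝ) < (2:ℝ) ^ α := Real.rpow_pos_of_pos (by norm_num) α
  have hXpos : (0:ℝ) < ((2*C₁:ℝ)) ^ α := Real.rpow_pos_of_pos (by linarith) α
  obtain ⟨c', hc'pos, hc'3⟩ :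
      ∃ c' : ℝ, 0 < c' ∧ c' * C₁ ^ 2 * (2 * C₁) ^ α = c₀ / 2 ^ α := by
    refine ⟨c₀ / 2 ^ α / (2 * C₁) ^ α / C₁ ^ 2,
      div_pos (div_pos (div_pos hp.c_pos h2αpos) hXpos) (pow_pos hC₁0 2), ?_⟩
    rw [div_mul_cancel₀ _ (ne_of_gt (pow_pos hC₁0 2)),
      div_mul_cancel₀ _ (ne_of_gt hXpos)]
  obtain ⟨K, hK1, hKC₁3, hKξ, hK64⟩ :
      ∃ K : ℝ, 1 ≤ K ∧ 2 * C₁ ^ 3 ≤ K ∧ 2 * C₁ * ξ₀ ≤ K ∧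
        (6 + 4 * (C₀ * (2 * C₁ ^ 2) ^ α)) / c' ≤ K :=
    ⟨max (max 1 (2 * C₁ ^ 3)) (max (2 * C₁ * ξ₀) ((6 + 4 * (C₀ * (2 * C₁ ^ 2) ^ α)) / c')),
      le_trans (le_max_left _ _) (le_max_left _ _),
      le_trans (le_max_right _ _) (le_max_left _ _),
      le_trans (le_max_left _ _) (le_max_right _ _),
      le_trans (le_max_right _ _) (le_max_right _ _)⟩
  have hK0 : (0:ℝ) < K := lt_of_lt_of_le one_pos hK1
  -- the main real-variable estimate
  have key_pos : ∀ a b d s : ℝ, a + b + d + s = 0 → 0 < a →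
      |a| ≤ C₁ * |b| → |b| ≤ C₁ * |a| → |d| ≤ C₁ * |b| →
      |s| ≤ |d| / K → K * (1 + M) ^ (1/α) ≤ |a| →
      c' / 2 * |d| * |a| ^ α + |d| / K * (M + C₀ * |d| ^ α)
        ≤ |p a + p b + p d| := by
    intro a b d s hsum ha h1 h2 h3 hs hbig
    have haa : |a| = a := abs_of_pos ha
    rw [haa] at h1 h2 hbig ⊢
    have haα : (0:ℝ) ≤ a ^ α := Real.rpow_nonneg ha.le α
    have hC₁sq : (1:ℝ) ≤ C₁ ^ 2 := by nlinarith [hC₁]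
    have hKa : K ≤ a := by
      have h1M : (1:ℝ) ≤ (1 + M) ^ (1/α) := Real.one_le_rpow (by linarith) (by positivity)
      have h := mul_le_mul_of_nonneg_left h1M hK0.le
      rw [mul_one] at h
      linarith
    have haα2 : K * (1 + M) ≤ a ^ α := by
      have h0 : (0:ℝ) ≤ K * (1 + M) ^ (1/α) := by positivity
      have h1' : (K * (1 + M) ^ (1/α)) ^ α ≤ a ^ α :=
        Real.rpow_le_rpow h0 hbig hα0
      have h2' : (K * (1 + M) ^ (1/α)) ^ α = K ^ α * (1 + M) := by
        rw [Real.mul_rpow hK0.le (Real.rpow_nonneg (by linarith) _),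
          ← Real.rpow_mul (by linarith : (0:ℝ) ≤ 1 + M),
          one_div, inv_mul_cancel₀ hαne, Real.rpow_one]
      have h3' : K ≤ K ^ α := by
        calc K = K ^ (1:ℝ) := (Real.rpow_one K).symm
          _ ≤ K ^ α := Real.rpow_le_rpow_of_exponent_le hK1 hα1
      have h4' : K ^ α * (1 + M) ≤ a ^ α := h2' ▸ h1'
      have h5' : K * (1 + M) ≤ K ^ α * (1 + M) :=
        mul_le_mul_of_nonneg_right h3' (by linarith)
      linarith
    have hM_a : K * M ≤ a ^ α := by linarith [haα2, hK0]
    have hK_a : K ≤ a ^ α := by linarith [haα2, mul_nonneg hK0.le hM0]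
    have hd2 : |d| ≤ C₁ ^ 2 * a := by
      have h := mul_le_mul_of_nonneg_left h2 hC₁0.le
      have h' : C₁ * (C₁ * a) = C₁ ^ 2 * a := by ring
      linarith [h3]
    have hsd : |s| ≤ a / (2 * C₁) := by
      have h5 : |d| / K ≤ C₁ ^ 2 * a / K := (div_le_div_iff_of_pos_right hK0).mpr hd2
      have h6 : C₁ ^ 2 * a / K ≤ C₁ ^ 2 * a / (2 * C₁ ^ 3) :=
        div_le_div_of_nonneg_left (mul_nonneg (by positivity) ha.le)
          (by positivity) hKC₁3
      have h7 : C₁ ^ 2 * a / (2 * C₁ ^ 3) = a / (2 * C₁) := by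
        field_simp
      linarith
    have hb_lb : a / C₁ ≤ |b| := by
      rw [div_le_iff₀ hC₁0]
      linarith [h1]
    have had : a / (2 * C₁) ≤ |a + d| := by
      have hb_eq : b = -(a + d + s) := by linarith
      have h8 : |b| ≤ |a + d| + |s| := by
        calc |b| = |(a + d) + s| := by rw [hb_eq, abs_neg]
          _ ≤ |a + d| + |s| := abs_add_le _ _
      have h9 : a / C₁ - a / (2 * C₁) = a / (2 * C₁) := by
        field_simp
        ring
      linarith
    have hcore := core hp hα1 hC₁ hM0 hMb hc'pos hc'3 a d
      (le_trans hKξ hKa) hd2 had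
    -- error term from the shift `b ≈ -(a+d)`
    have hCC : C₁ ≤ 2 * C₁ ^ 2 := by nlinarith [hC₁]
    have hbL : |b| ≤ 2 * C₁ ^ 2 * a := by
      have h := mul_le_mul_of_nonneg_right hCC ha.le
      linarith [h2]
    have hadL : |a + d| ≤ 2 * C₁ ^ 2 * a := by
      calc |a + d| ≤ |a| + |d| := abs_add_le _ _
        _ ≤ a + C₁ ^ 2 * a := by rw [haa]; linarith [hd2]
        _ ≤ 2 * C₁ ^ 2 * a := by
            have h := mul_le_mul_of_nonneg_right hC₁sq ha.le
            linarith
    have hE1 : |p b - p (-(a + d))| ≤ |s| * (M + C₀ * (2 * C₁ ^ 2 * a) ^ α) := by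
      have hl := lip hp hα1 hMb b (-(a + d)) (2 * C₁ ^ 2 * a) hbL
        (by rwa [abs_neg])
      have hbs : |b - -(a + d)| = |s| := by
        rw [show b - -(a + d) = -s by linarith]
        exact abs_neg s
      rwa [hbs] at hl
    have hpanel : p a + p b + p d
        = -(p (a + d) - p a - p d) + (p b - p (-(a + d))) := by
      rw [hp.odd (a + d)]
      ring
    have habs2 : |d| * (c' * a ^ α - M) - |s| * (M + C₀ * (2 * C₁ ^ 2 * a) ^ α)
        ≤ |p a + p b + p d| := by
      have t1 : |(-(p (a + d) - p a - p d))| - |p b - p (-(a + d))|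
          ≤ |p a + p b + p d| := by
        have h := abs_add_le ((-(p (a + d) - p a - p d)) + (p b - p (-(a + d))))
          (-(p b - p (-(a + d))))
        simp only [add_neg_cancel_right, abs_neg] at h
        rw [hpanel]
        simp only [abs_neg]
        linarith
      rw [abs_neg] at t1
      linarith [hcore, hE1]
    -- final arithmetic
    have hMle : M ≤ a ^ α / K := (le_div_iff₀ hK0).mpr (by linarith [hM_a])
    have hMle2 : M ≤ a ^ α := by
      have h := mul_le_mul_of_nonneg_right hK1 hM0
      rw [one_mul] at h
      linarith [hM_a]
    have hdα : |d| ^ α ≤ (2 * C₁ ^ 2) ^ α * a ^ α := by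
      have hh1 : |d| ^ α ≤ (C₁ ^ 2 * a) ^ α :=
        Real.rpow_le_rpow (abs_nonneg d) hd2 hα0
      have hh2 : (C₁ ^ 2 * a) ^ α = (C₁ ^ 2) ^ α * a ^ α :=
        Real.mul_rpow (by positivity) ha.le
      have hh3 : (C₁ ^ 2) ^ α ≤ (2 * C₁ ^ 2) ^ α :=
        Real.rpow_le_rpow (by positivity) (by linarith [sq_nonneg C₁]) hα0
      have hh4 : (C₁ ^ 2) ^ α * a ^ α ≤ (2 * C₁ ^ 2) ^ α * a ^ α :=
        mul_le_mul_of_nonneg_right hh3 haα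
      linarith [hh1, hh2 ▸ hh1]
    have hLα : (2 * C₁ ^ 2 * a) ^ α = (2 * C₁ ^ 2) ^ α * a ^ α :=
      Real.mul_rpow (by positivity) ha.le
    have ht1 : |d| / K * (M + C₀ * |d| ^ α)
        ≤ |d| / K * ((1 + C₀ * (2 * C₁ ^ 2) ^ α) * a ^ α) := by
      apply mul_le_mul_of_nonneg_left _ (by positivity)
      have h := mul_le_mul_of_nonneg_left hdα hC₀.le
      linarith [hMle2]
    have ht2 : |s| * (M + C₀ * (2 * C₁ ^ 2 * a) ^ α)
        ≤ |d| / K * ((1 + C₀ * (2 * C₁ ^ 2) ^ α) * a ^ α) := by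
      have inner : M + C₀ * (2 * C₁ ^ 2 * a) ^ α
          ≤ (1 + C₀ * (2 * C₁ ^ 2) ^ α) * a ^ α := by
        rw [hLα]
        linarith [hMle2]
      have hinner0 : 0 ≤ M + C₀ * (2 * C₁ ^ 2 * a) ^ α := by
        have : (0:ℝ) ≤ C₀ * (2 * C₁ ^ 2 * a) ^ α :=
          mul_nonneg hC₀.le (Real.rpow_nonneg (by positivity) _)
        linarith
      exact mul_le_mul hs inner hinner0 (by positivity)
    have ht3 : |d| * M ≤ |d| * (a ^ α / K) :=
      mul_le_mul_of_nonneg_left hMle (abs_nonneg d)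
    have hfrac : 6 + 4 * (C₀ * (2 * C₁ ^ 2) ^ α) ≤ K * c' :=
      (div_le_iff₀ hc'pos).mp hK64
    have hDX : 0 ≤ |d| * a ^ α := mul_nonneg (abs_nonneg d) haα
    have hstep : c' / 2 * |d| * a ^ α
        + |d| / K * ((1 + C₀ * (2 * C₁ ^ 2) ^ α) * a ^ α)
        + |d| / K * ((1 + C₀ * (2 * C₁ ^ 2) ^ α) * a ^ α)
        + |d| * (a ^ α / K) ≤ c' * |d| * a ^ α := by
      have h10 : c' / 2 + (3 + 2 * (C₀ * (2 * C₁ ^ 2) ^ α)) / K ≤ c' := by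
        have h11 : (3 + 2 * (C₀ * (2 * C₁ ^ 2) ^ α)) / K ≤ c' / 2 := by
          rw [div_le_div_iff₀ hK0 two_pos]
          linarith [hfrac]
        linarith
      calc c' / 2 * |d| * a ^ α
          + |d| / K * ((1 + C₀ * (2 * C₁ ^ 2) ^ α) * a ^ α)
          + |d| / K * ((1 + C₀ * (2 * C₁ ^ 2) ^ α) * a ^ α)
          + |d| * (a ^ α / K)
          = (|d| * a ^ α) * (c' / 2 + (3 + 2 * (C₀ * (2 * C₁ ^ 2) ^ α)) / K) := by
            ring
        _ ≤ (|d| * a ^ α) * c' := mul_le_mul_of_nonneg_left h10 hDX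
        _ = c' * |d| * a ^ α := by ring
    linarith [habs2, ht1, ht2, ht3, hstep]
  -- remove the sign assumption using oddness
  have key : ∀ a b d s : ℝ, a + b + d + s = 0 →
      |a| ≤ C₁ * |b| → |b| ≤ C₁ * |a| → |d| ≤ C₁ * |b| →
      |s| ≤ |d| / K → K * (1 + M) ^ (1/α) ≤ |a| →
      c' / 2 * |d| * |a| ^ α + |d| / K * (M + C₀ * |d| ^ α)
        ≤ |p a + p b + p d| := by
    intro a b d s hsum h1 h2 h3 hs hbig
    rcases lt_trichotomy a 0 with hneg | h0 | hpos
    · have h := key_pos (-a) (-b) (-d) (-s) (by linarith) (by linarith)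
        (by simpa [abs_neg] using h1) (by simpa [abs_neg] using h2)
        (by simpa [abs_neg] using h3) (by simpa [abs_neg] using hs)
        (by simpa [abs_neg] using hbig)
      simp only [abs_neg, hp.odd] at h
      have hrw : |-p a + -p b + -p d| = |p a + p b + p d| := by
        rw [show -p a + -p b + -p d = -(p a + p b + p d) by ring, abs_neg]
      rwa [hrw] at h
    · exfalso
      have hK' : 0 < K * (1 + M) ^ (1/α) :=
        mul_pos hK0 (Real.rpow_pos_of_pos (by linarith) _)
      rw [h0, abs_zero] at hbig
      linarith
    · exact key_pos a b d s hsum hpos h1 h2 h3 hs hbig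
  refine ⟨c' / 2, by positivity, K, hK1, ?_⟩
  intro k hk ξ hsum h01 h10 h21 htail hbig
  obtain ⟨m, rfl⟩ : ∃ m, k = m + 1 := ⟨k - 1, (Nat.succ_pred_eq_of_pos hk).symm⟩
  have hsplit : ∀ g : Fin (m + 1 + 2) → ℝ,
      ∑ j, g j = g 0 + (g 1 + (g 2 + ∑ j : Fin m, g j.succ.succ.succ)) := by
    intro g
    rw [Fin.sum_univ_succ, Fin.sum_univ_succ, Fin.sum_univ_succ]
    simp [Fin.succ_zero_eq_one, Fin.succ_one_eq_two]
  have hsumR : ((ξ 0 : ℤ) : ℝ) + ((ξ 1 : ℤ) : ℝ) + ((ξ 2 : ℤ) : ℝ)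
      + (∑ j : Fin m, ((ξ j.succ.succ.succ : ℤ) : ℝ)) = 0 := by
    have h := congrArg (fun z : ℤ => (z : ℝ)) hsum
    push_cast at h
    rw [hsplit (fun j => ((ξ j : ℤ) : ℝ))] at h
    linarith [h]
  have hKk' : (0:ℝ) < K * ((m:ℝ) + 1) := by positivity
  have htail' : ∀ j : Fin m,
      |((ξ j.succ.succ.succ : ℤ) : ℝ)| ≤ |((ξ 2 : ℤ) : ℝ)| / (K * ((m:ℝ) + 1)) := by
    intro j
    have h := htail j.succ.succ.succ (by simp [Fin.val_succ])
    rw [le_div_iff₀ hKk']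
    push_cast at h
    linarith [h]
  have hsumb : ∀ (g : Fin m → ℝ) (Bd : ℝ), 0 ≤ Bd →
      (∀ j, |g j| ≤ Bd / ((m:ℝ) + 1)) → |∑ j, g j| ≤ Bd := by
    intro g Bd hBd hg
    have hm1 : (0:ℝ) < (m:ℝ) + 1 := by positivity
    calc |∑ j, g j| ≤ ∑ j, |g j| := Finset.abs_sum_le_sum_abs _ _
      _ ≤ ∑ _j : Fin m, Bd / ((m:ℝ) + 1) := Finset.sum_le_sum (fun j _ => hg j)
      _ = (m:ℝ) * (Bd / ((m:ℝ) + 1)) := by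
          rw [Finset.sum_const, Finset.card_univ, Fintype.card_fin, nsmul_eq_mul]
      _ ≤ Bd := by
          have h1 : (m:ℝ) * (Bd / ((m:ℝ) + 1))
              ≤ ((m:ℝ) + 1) * (Bd / ((m:ℝ) + 1)) :=
            mul_le_mul_of_nonneg_right (by linarith) (div_nonneg hBd hm1.le)
          have h2 : ((m:ℝ) + 1) * (Bd / ((m:ℝ) + 1)) = Bd := by
            field_simp
          linarith
  have hs_bound : |∑ j : Fin m, ((ξ j.succ.succ.succ : ℤ) : ℝ)|
      ≤ |((ξ 2 : ℤ) : ℝ)| / K := by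
    apply hsumb _ _ (by positivity)
    intro j
    rw [div_div]
    exact htail' j
  have hMC : 0 ≤ M + C₀ * |((ξ 2 : ℤ) : ℝ)| ^ α :=
    add_nonneg hM0 (mul_nonneg hC₀.le (Real.rpow_nonneg (abs_nonneg _) _))
  have hT_bound : |∑ j : Fin m, p ((ξ j.succ.succ.succ : ℤ) : ℝ)|
      ≤ |((ξ 2 : ℤ) : ℝ)| / K * (M + C₀ * |((ξ 2 : ℤ) : ℝ)| ^ α) := by
    apply hsumb _ _ (mul_nonneg (by positivity) hMC)
    intro j
    have h1 := pbound hp hα1 hMb ((ξ j.succ.succ.succ : ℤ) : ℝ)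
    have hK1' : (1:ℝ) ≤ K * ((m:ℝ) + 1) := by
      have hm0 : (0:ℝ) ≤ (m:ℝ) := Nat.cast_nonneg m
      calc (1:ℝ) = 1 * 1 := by norm_num
        _ ≤ K * ((m:ℝ) + 1) := mul_le_mul hK1 (by linarith) (by norm_num) (by linarith)
    have h2 : |((ξ j.succ.succ.succ : ℤ) : ℝ)| ≤ |((ξ 2 : ℤ) : ℝ)| :=
      le_trans (htail' j) (div_le_self (abs_nonneg _) hK1')
    have h3 : |((ξ j.succ.succ.succ : ℤ) : ℝ)| ^ α ≤ |((ξ 2 : ℤ) : ℝ)| ^ α :=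
      Real.rpow_le_rpow (abs_nonneg _) h2 hα0
    have h4 : |p ((ξ j.succ.succ.succ : ℤ) : ℝ)|
        ≤ |((ξ j.succ.succ.succ : ℤ) : ℝ)| * (M + C₀ * |((ξ 2 : ℤ) : ℝ)| ^ α) := by
      refine le_trans h1 (mul_le_mul_of_nonneg_left ?_ (abs_nonneg _))
      have := mul_le_mul_of_nonneg_left h3 hC₀.le
      linarith
    calc |p ((ξ j.succ.succ.succ : ℤ) : ℝ)|
        ≤ |((ξ j.succ.succ.succ : ℤ) : ℝ)| * (M + C₀ * |((ξ 2 : ℤ) : ℝ)| ^ α) := h4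
      _ ≤ (|((ξ 2 : ℤ) : ℝ)| / (K * ((m:ℝ) + 1)))
            * (M + C₀ * |((ξ 2 : ℤ) : ℝ)| ^ α) :=
          mul_le_mul_of_nonneg_right (htail' j) hMC
      _ = |((ξ 2 : ℤ) : ℝ)| / K * (M + C₀ * |((ξ 2 : ℤ) : ℝ)| ^ α) / ((m:ℝ) + 1) := by
          rw [← div_div]
          ring
  have hkey := key ((ξ 0 : ℤ) : ℝ) ((ξ 1 : ℤ) : ℝ) ((ξ 2 : ℤ) : ℝ)
    (∑ j : Fin m, ((ξ j.succ.succ.succ : ℤ) : ℝ)) hsumR h01 h10 h21 hs_bound hbig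
  have hΩ : ∑ n, p ((ξ n : ℤ) : ℝ)
      = (p ((ξ 0 : ℤ) : ℝ) + p ((ξ 1 : ℤ) : ℝ) + p ((ξ 2 : ℤ) : ℝ))
        + ∑ j : Fin m, p ((ξ j.succ.succ.succ : ℤ) : ℝ) := by
    rw [hsplit (fun j => p ((ξ j : ℤ) : ℝ))]
    ring
  have habs : |p ((ξ 0 : ℤ) : ℝ) + p ((ξ 1 : ℤ) : ℝ) + p ((ξ 2 : ℤ) : ℝ)|
      - |∑ j : Fin m, p ((ξ j.succ.succ.succ : ℤ) : ℝ)|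
      ≤ |∑ n, p ((ξ n : ℤ) : ℝ)| := by
    have h := abs_add_le
      ((p ((ξ 0 : ℤ) : ℝ) + p ((ξ 1 : ℤ) : ℝ) + p ((ξ 2 : ℤ) : ℝ))
        + ∑ j : Fin m, p ((ξ j.succ.succ.succ : ℤ) : ℝ))
      (-(∑ j : Fin m, p ((ξ j.succ.succ.succ : ℤ) : ℝ)))
    rw [add_neg_cancel_right, abs_neg] at h
    rw [hΩ]
    linarith
  linarith [hkey, hT_bound, habs]

end
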